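/- arXiv:2409.00350 — 5 statements merged into one kernel-verified Lean document; each statement's English description precedes it below -/
import Mathlib

section
/- In an oriented graph, every source and every sink belongs to every monitoring arc-geodetic set. -/
namespace MAG

variable {V : Type*}

/-- Directed walk from `x` to `y` whose list of visited vertices is `l`. -/
inductive DWalk (A : V → V → Prop) : V → V → List V → Prop
  | nil (v : V) : DWalk A v v [v]
  | cons {u v w : V} {l : List V} (h : A u v) (p : DWalk A v w l) :
      DWalk A u w (u :: l)

/-- The arc `(a, b)` lies on the walk with vertex list `l`. -/
def ArcOn (a b : V) (l : List V) : Prop :=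
  ∃ l₁ l₂ : List V, l = l₁ ++ a :: b :: l₂

/-- `l` is (the vertex list of) a shortest directed walk from `x` to `y`. -/
def IsShortest (A : V → V → Prop) (x y : V) (l : List V) : Prop :=
  DWalk A x y l ∧ ∀ l' : List V, DWalk A x y l' → l.length ≤ l'.length

/-- `x` and `y` monitor the arc `(a, b)`: the arc lies on every shortest
directed path from `x` to `y` (and such a path exists), or symmetrically
from `y` to `x`. -/
def Monitors (A : V → V → Prop) (x y a b : V) : Prop :=
  ((∃ l, IsShortest A x y l) ∧ ∀ l, IsShortest A x y l → ArcOn a b l) ∨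
  ((∃ l, IsShortest A y x l) ∧ ∀ l, IsShortest A y x l → ArcOn a b l)

/-- A monitoring arc-geodetic set of the digraph `A`. -/
def IsMAGSet (A : V → V → Prop) (M : Set V) : Prop :=
  ∀ a b : V, A a b → ∃ x ∈ M, ∃ y ∈ M, x ≠ y ∧ Monitors A x y a b

/-- The monitoring arc-geodetic number of the digraph `A`. -/
noncomputable def mag (A : V → V → Prop) [Fintype V] : ℕ :=
  sInf {n | ∃ M : Finset V, IsMAGSet A (M : Set V) ∧ M.card = n}

/-- `A` is an orientation of the undirected simple graph `G`. -/
structure IsOrientation (G : SimpleGraph V) (A : V → V → Prop) : Prop where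
  adj_iff : ∀ u v : V, G.Adj u v ↔ (A u v ∨ A v u)
  asymm : ∀ u v : V, A u v → ¬ A v u

/-- The lower monitoring arc-geodetic number of `G`. -/
noncomputable def magMinus (G : SimpleGraph V) [Fintype V] : ℕ :=
  sInf {n | ∃ A : V → V → Prop, IsOrientation G A ∧ mag A = n}

/-- The upper monitoring arc-geodetic number of `G`. -/
noncomputable def magPlus (G : SimpleGraph V) [Fintype V] : ℕ :=
  sSup {n | ∃ A : V → V → Prop, IsOrientation G A ∧ mag A = n}

/-- A source: a vertex with no in-neighbours. -/
def IsSource (A : V → V → Prop) (v : V) : Prop := ∀ w, ¬ A w v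

/-- A sink: a vertex with no out-neighbours. -/
def IsSink (A : V → V → Prop) (v : V) : Prop := ∀ w, ¬ A v w

/-- An oriented graph: no loops and no pair of opposite arcs. -/
def IsOrientedGraph (A : V → V → Prop) : Prop :=
  (∀ v, ¬ A v v) ∧ ∀ u v : V, A u v → ¬ A v u

/-- The underlying undirected graph of `A` is connected. -/
def IsConnectedDigraph (A : V → V → Prop) : Prop :=
  ∀ x y : V, Relation.ReflTransGen (fun a b => A a b ∨ A b a) x y


lemma dwalk_arcOn_start {A : V → V → Prop} {s t a b : V} {l : List V}
    (h : DWalk A s t l) (hab : ArcOn a b l) : s = a ∨ ∃ w, A w a := by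
  induction h with
  | nil v =>
    obtain ⟨l₁, l₂, hl⟩ := hab
    have := congrArg List.length hl
    simp at this; omega
  | cons h p ih =>
    obtain ⟨l₁, l₂, hl⟩ := hab
    cases l₁ with
    | nil =>
      simp at hl
      exact Or.inl hl.1
    | cons c l₁' =>
      simp at hl
      rcases ih ⟨l₁', l₂, hl.2⟩ with h' | h'
      · exact Or.inr ⟨_, h' ▸ h⟩
      · exact Or.inr h'

lemma dwalk_arcOn_end {A : V → V → Prop} {s t a b : V} {l : List V}
    (h : DWalk A s t l) (hab : ArcOn a b l) : t = b ∨ ∃ w, A b w := by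
  induction h with
  | nil v =>
    obtain ⟨l₁, l₂, hl⟩ := hab
    have := congrArg List.length hl
    simp at this; omega
  | cons h p ih =>
    obtain ⟨l₁, l₂, hl⟩ := hab
    cases l₁ with
    | nil =>
      simp at hl
      obtain ⟨-, hl2⟩ := hl
      rw [hl2] at p
      cases p with
      | nil => exact Or.inl rfl
      | cons h' _ => exact Or.inr ⟨_, h'⟩
    | cons c l₁' =>
      simp at hl
      exact ih ⟨l₁', l₂, hl.2⟩

/-- In a (connected, nontrivial) oriented graph, every source and
every sink belongs to every monitoring arc-geodetic set. -/
theorem source_or_sink_mem_MAGSet {V : Type*} [Nontrivial V] (A : V → V → Prop)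
    (hor : IsOrientedGraph A) (hconn : IsConnectedDigraph A)
    (u : V) (hu : IsSource A u ∨ IsSink A u)
    (M : Set V) (hM : IsMAGSet A M) : u ∈ M := by
  obtain ⟨v, hv⟩ := exists_ne u
  obtain ⟨c, hc⟩ : ∃ c, A u c ∨ A c u := by
    rcases (hconn u v).cases_head with heq | ⟨c, hcc, -⟩
    · exact absurd heq.symm hv
    · exact ⟨c, hcc⟩
  rcases hu with hsrc | hsink
  · have harc : A u c := hc.resolve_right (hsrc c)
    obtain ⟨x, hx, y, hy, hxy, hmon⟩ := hM u c harc
    rcases hmon with ⟨⟨l, hl⟩, hall⟩ | ⟨⟨l, hl⟩, hall⟩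
    · rcases dwalk_arcOn_start hl.1 (hall l hl) with h | ⟨w, hw⟩
      · exact h ▸ hx
      · exact absurd hw (hsrc w)
    · rcases dwalk_arcOn_start hl.1 (hall l hl) with h | ⟨w, hw⟩
      · exact h ▸ hy
      · exact absurd hw (hsrc w)
  · have harc : A c u := hc.resolve_left (hsink c)
    obtain ⟨x, hx, y, hy, hxy, hmon⟩ := hM c u harc
    rcases hmon with ⟨⟨l, hl⟩, hall⟩ | ⟨⟨l, hl⟩, hall⟩
    · rcases dwalk_arcOn_end hl.1 (hall l hl) with h | ⟨w, hw⟩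
      · exact h ▸ hy
      · exact absurd hw (hsink w)
    · rcases dwalk_arcOn_end hl.1 (hall l hl) with h | ⟨w, hw⟩
      · exact h ▸ hx
      · exact absurd hw (hsink w)

end MAG
end

section
/- Every connected bipartite graph G with at least one edge admits an orientation whose unique minimum monitoring arc-geodetic set is the entire vertex set; in particular, the upper monitoring arc-geodetic number of G equals |V(G)|. -/
namespace MAG

variable {V : Type*}

section Aux

variable {A : V → V → Prop}

lemma DWalk.one_le_length {x y : V} {l : List V} (p : DWalk A x y l) :
    1 ≤ l.length := by cases p <;> simp

lemma dwalk_adj {a b : V} (h : A a b) : DWalk A a b [a, b] :=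
  .cons h (.nil b)

lemma two_le_length {x y : V} {l : List V} (hxy : x ≠ y) (p : DWalk A x y l) :
    2 ≤ l.length := by
  cases p with
  | nil => exact absurd rfl hxy
  | cons h p => simpa using p.one_le_length

lemma eq_pair_of_length_le {a b : V} {l : List V} (hab : a ≠ b)
    (p : DWalk A a b l) (hl : l.length ≤ 2) : l = [a, b] ∧ A a b := by
  cases p with
  | nil => exact absurd rfl hab
  | cons h p =>
    cases p with
    | nil => exact ⟨rfl, h⟩
    | cons h' p' =>
      have := p'.one_le_length
      simp only [List.length_cons] at hl
      omega

lemma isShortest_adj {a b : V} (hab : a ≠ b) (h : A a b) :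
    IsShortest A a b [a, b] :=
  ⟨dwalk_adj h, fun _ hl' => two_le_length hab hl'⟩

lemma shortest_eq_pair {a b : V} {l : List V} (hab : a ≠ b) (h : A a b)
    (hl : IsShortest A a b l) : l = [a, b] :=
  (eq_pair_of_length_le hab hl.1 (hl.2 _ (dwalk_adj h))).1

lemma monitors_adj {a b : V} (hab : a ≠ b) (h : A a b) : Monitors A a b a b :=
  Or.inl ⟨⟨_, isShortest_adj hab h⟩, fun l hl => by
    rw [shortest_eq_pair hab h hl]; exact ⟨[], [], rfl⟩⟩

lemma univ_isMAGSet (hirr : ∀ v, ¬ A v v) : IsMAGSet A Set.univ :=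
  fun a b h =>
    have hab : a ≠ b := fun he => hirr a (he ▸ h)
    ⟨a, trivial, b, trivial, hab, monitors_adj hab h⟩

lemma mag_le_card [Fintype V] (hirr : ∀ v, ¬ A v v) :
    mag A ≤ Fintype.card V :=
  Nat.sInf_le ⟨Finset.univ, by simpa using univ_isMAGSet hirr, Finset.card_univ⟩

end Aux

/-- every connected bipartite graph with an edge admits an
orientation whose unique minimum MAG-set is the whole vertex set, and
consequently `mag⁺(G) = |V(G)|`. -/
theorem bipartite_magPlus_eq_card {V : Type*} [Fintype V] (G : SimpleGraph V)
    (hconn : G.Connected) (hedge : ∃ u v : V, G.Adj u v)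
    (hbip : G.Colorable 2) :
    (∃ A : V → V → Prop, IsOrientation G A ∧
      (∀ M : Set V, IsMAGSet A M → M = Set.univ)) ∧
    magPlus G = Fintype.card V := by
  obtain ⟨c⟩ := hbip
  set A : V → V → Prop := fun u v => G.Adj u v ∧ c u = 0 ∧ c v = 1 with hA
  have fin2 : ∀ x y : Fin 2, x ≠ y → (x = 0 ∧ y = 1) ∨ (x = 1 ∧ y = 0) := by decide
  have hno : ∀ {u v w : V}, A u v → A v w → False := by
    intro u v w h1 h2
    exact absurd (h2.2.1.symm.trans h1.2.2) (by decide)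
  have hirr : ∀ v, ¬ A v v := fun v h => hno h h
  -- A is an orientation of G
  have horient : IsOrientation G A := by
    constructor
    · intro u v
      constructor
      · intro huv
        rcases fin2 _ _ (c.valid huv) with ⟨h0, h1⟩ | ⟨h1, h0⟩
        · exact Or.inl ⟨huv, h0, h1⟩
        · exact Or.inr ⟨huv.symm, h0, h1⟩
      · rintro (⟨h, _⟩ | ⟨h, _⟩)
        · exact h
        · exact h.symm
    · rintro u v ⟨_, _, h1⟩ ⟨_, h0, _⟩
      exact absurd (h0.symm.trans h1) (by decide)
  -- every walk between distinct vertices is a single arc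
  have hwalk : ∀ x y : V, ∀ l : List V, DWalk A x y l → x ≠ y →
      l = [x, y] ∧ A x y := by
    intro x y l p hxy
    cases p with
    | nil => exact absurd rfl hxy
    | cons h p =>
      cases p with
      | nil => exact ⟨rfl, h⟩
      | cons h' _ => exact (hno h h').elim
  -- key: a one-sided monitoring of (a,b) forces x = a, y = b
  have key : ∀ x y a b : V,
      ((∃ l, IsShortest A x y l) ∧ ∀ l, IsShortest A x y l → ArcOn a b l) →
      x = a ∧ y = b := by
    rintro x y a b ⟨⟨l, hl⟩, hall⟩
    obtain ⟨l₁, l₂, heq⟩ := hall l hl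
    by_cases hxy : x = y
    · exfalso
      subst hxy
      have hle := hl.2 [x] (DWalk.nil x)
      rw [heq] at hle
      simp at hle
      omega
    · obtain ⟨hpair, _⟩ := hwalk x y l hl.1 hxy
      rw [hpair] at heq
      cases l₁ with
      | nil => simp_all
      | cons c₁ t₁ =>
        cases t₁ with
        | nil => simp_all
        | cons c₂ t₂ => simp_all
  -- every MAG set is the whole vertex set
  have huniq : ∀ M : Set V, IsMAGSet A M → M = Set.univ := by
    intro M hM
    apply Set.eq_univ_iff_forall.mpr
    intro v
    obtain ⟨u, w, huw⟩ := hedge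
    -- v has a neighbour
    obtain ⟨z, hvz⟩ : ∃ z, G.Adj v z := by
      obtain ⟨p⟩ := hconn.preconnected v u
      cases p with
      | nil => exact ⟨w, huw⟩
      | cons h _ => exact ⟨_, h⟩
    have harc : A v z ∨ A z v := (horient.adj_iff v z).mp hvz
    have step : ∀ a b : V, A a b → (v = a ∨ v = b) → v ∈ M := by
      rintro a b hab hv
      obtain ⟨x, hx, y, hy, hxy, hmon⟩ := hM a b hab
      rcases hmon with h | h
      · obtain ⟨rfl, rfl⟩ := key _ _ _ _ h
        rcases hv with rfl | rfl <;> assumption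
      · obtain ⟨rfl, rfl⟩ := key _ _ _ _ h
        rcases hv with rfl | rfl <;> assumption
    rcases harc with h | h
    · exact step _ _ h (Or.inl rfl)
    · exact step _ _ h (Or.inr rfl)
  -- mag A = card V
  have hmagA : mag A = Fintype.card V := by
    have hS : {n | ∃ M : Finset V, IsMAGSet A (M : Set V) ∧ M.card = n} =
        {Fintype.card V} := by
      ext n
      simp only [Set.mem_setOf_eq, Set.mem_singleton_iff]
      constructor
      · rintro ⟨M, hM, rfl⟩
        have h1 : (M : Set V) = Set.univ := huniq _ hM
        have h2 : M = Finset.univ := Finset.coe_injective (by simpa using h1)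
        simp [h2]
      · rintro rfl
        exact ⟨Finset.univ, by simpa using univ_isMAGSet hirr, Finset.card_univ⟩
    rw [mag, hS, csInf_singleton]
  refine ⟨⟨A, horient, huniq⟩, ?_⟩
  -- magPlus
  have hmem : Fintype.card V ∈
      {n | ∃ A' : V → V → Prop, IsOrientation G A' ∧ mag A' = n} :=
    ⟨A, horient, hmagA⟩
  have hbd : ∀ n ∈ {n | ∃ A' : V → V → Prop, IsOrientation G A' ∧ mag A' = n},
      n ≤ Fintype.card V := by
    rintro n ⟨A', hA', rfl⟩
    exact mag_le_card (fun v h => hA'.asymm v v h h)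
  exact le_antisymm (csSup_le ⟨_, hmem⟩ hbd) (le_csSup ⟨_, hbd⟩ hmem)

end MAG
end

section
/- In any oriented graph, if two distinct vertices u and v are twins (i.e., they have the same in-neighborhood and the same out-neighborhood), then both u and v belong to every monitoring arc-geodetic set. -/
namespace MAG

variable {V : Type*}

lemma DWalk.map {A : V → V → Prop} (f : V → V)
    (hf : ∀ a b, A a b → A (f a) (f b)) {x y : V} {l : List V}
    (p : DWalk A x y l) : DWalk A (f x) (f y) (l.map f) := by
  induction p with
  | nil v => simpa using DWalk.nil (f v)
  | cons h _ ih => exact DWalk.cons (hf _ _ h) ih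

lemma ArcOn.mem_left {a b : V} {l : List V} (h : ArcOn a b l) : a ∈ l := by
  obtain ⟨l₁, l₂, rfl⟩ := h; simp

lemma ArcOn.mem_right {a b : V} {l : List V} (h : ArcOn a b l) : b ∈ l := by
  obtain ⟨l₁, l₂, rfl⟩ := h; simp

lemma key_mem (A : V → V → Prop) (u v : V) (huv : u ≠ v)
    (hloop : ¬ A u u)
    (hout : ∀ w, A u w ↔ A v w) (hin : ∀ w, A w u ↔ A w v)
    {a b : V} (hab : A a b) (hu : a = u ∨ b = u)
    (M : Set V) (hM : IsMAGSet A M) : u ∈ M := by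
  classical
  by_contra hUM
  set f : V → V := fun z => if z = u then v else z with hfdef
  have hfu : ∀ z, f z ≠ u := by
    intro z
    simp only [hfdef]
    split
    · exact fun h => huv h.symm
    · assumption
  have hfix : ∀ z, z ≠ u → f z = z := by
    intro z hz; simp [hfdef, hz]
  have hf : ∀ s t, A s t → A (f s) (f t) := by
    intro s t h
    by_cases hs : s = u <;> by_cases ht : t = u
    · rw [hs, ht] at h; exact absurd h hloop
    · have hfs : f s = v := by rw [hfdef]; simp [hs]
      rw [hfs, hfix t ht]
      exact (hout t).mp (hs ▸ h)
    · have hft : f t = v := by rw [hfdef]; simp [ht]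
      rw [hft, hfix s hs]
      exact (hin s).mp (ht ▸ h)
    · rw [hfix s hs, hfix t ht]; exact h
  obtain ⟨x, hx, y, hy, hxy, hmon⟩ := hM a b hab
  have hxu : x ≠ u := fun h => hUM (h ▸ hx)
  have hyu : y ≠ u := fun h => hUM (h ▸ hy)
  -- symmetric handling of the two cases of Monitors
  have main : ∀ p q : V, p ≠ u → q ≠ u →
      (∃ l, IsShortest A p q l) → (∀ l, IsShortest A p q l → ArcOn a b l) → False := by
    intro p q hp hq ⟨l, hl⟩ hall
    have hw : DWalk A (f p) (f q) (l.map f) := hl.1.map f hf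
    rw [hfix p hp, hfix q hq] at hw
    have hshort : IsShortest A p q (l.map f) := by
      constructor
      · exact hw
      · intro l' hl'
        simpa using hl.2 l' hl'
    have harc := hall _ hshort
    have : u ∈ l.map f := by
      rcases hu with rfl | rfl
      · exact harc.mem_left
      · exact harc.mem_right
    obtain ⟨z, _, hz⟩ := List.mem_map.mp this
    exact hfu z hz
  rcases hmon with ⟨he, ha⟩ | ⟨he, ha⟩
  · exact main x y hxu hyu he ha
  · exact main y x hyu hxu he ha

/-- in a (connected, nontrivial) oriented graph, every pair of
twins belongs to every MAG-set. -/
theorem twins_mem_MAGSet {V : Type*} [Nontrivial V] (A : V → V → Prop)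
    (hor : IsOrientedGraph A) (hconn : IsConnectedDigraph A)
    (u v : V) (huv : u ≠ v)
    (hout : ∀ w, A u w ↔ A v w) (hin : ∀ w, A w u ↔ A w v)
    (M : Set V) (hM : IsMAGSet A M) : u ∈ M ∧ v ∈ M := by
  have hnbr : ∀ z : V, ∃ w, A z w ∨ A w z := by
    intro z
    obtain ⟨y, hy⟩ := exists_ne z
    rcases (hconn z y).cases_head with h | ⟨c, hc, _⟩
    · exact absurd h.symm hy
    · exact ⟨c, hc⟩
  constructor
  · obtain ⟨w, hw⟩ := hnbr u
    rcases hw with h | h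
    · exact key_mem A u v huv (hor.1 u) hout hin h (Or.inl rfl) M hM
    · exact key_mem A u v huv (hor.1 u) hout hin h (Or.inr rfl) M hM
  · obtain ⟨w, hw⟩ := hnbr v
    have hout' : ∀ w, A v w ↔ A u w := fun w => (hout w).symm
    have hin' : ∀ w, A w v ↔ A w u := fun w => (hin w).symm
    rcases hw with h | h
    · exact key_mem A v u huv.symm (hor.1 v) hout' hin' h (Or.inl rfl) M hM
    · exact key_mem A v u huv.symm (hor.1 v) hout' hin' h (Or.inr rfl) M hM

end MAG
end

section
/- For the directed cycle on n ≥ 3 vertices (all arcs oriented consistently around the cycle), any pair of distinct vertices forms a monitoring arc-geodetic set; hence its monitoring arc-geodetic number equals 2. -/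
namespace MAG

variable {V : Type*}

section Cycle

set_option linter.unusedSectionVars false

variable {n : ℕ} [NeZero n]

/-- The canonical path `x, x+1, …, x+k` in the directed cycle. -/
def L (x : ZMod n) (k : ℕ) : List (ZMod n) :=
  (List.range (k + 1)).map (fun i : ℕ => x + (i : ZMod n))

lemma L_length (x : ZMod n) (k : ℕ) : (L x k).length = k + 1 := by
  rw [L, List.length_map, List.length_range]

lemma L_zero (x : ZMod n) : L x 0 = [x] := by
  simp [L, List.range_succ]

lemma L_succ (x : ZMod n) (k : ℕ) : L x (k + 1) = x :: L (x + 1) k := by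
  rw [L, L, List.range_succ_eq_map, List.map_cons, List.map_map, Nat.cast_zero, add_zero]
  congr 1
  apply List.map_congr_left
  intro i _
  simp only [Function.comp_apply]
  push_cast
  ring

lemma L_head (x : ZMod n) (k : ℕ) : ∃ t, L x k = x :: t := by
  cases k with
  | zero => exact ⟨[], L_zero x⟩
  | succ k => exact ⟨L (x + 1) k, L_succ x k⟩

lemma dwalk_L (k : ℕ) (x : ZMod n) :
    DWalk (fun i j : ZMod n => j = i + 1) x (x + (k : ZMod n)) (L x k) := by
  induction k generalizing x with
  | zero =>
      rw [L_zero, Nat.cast_zero, add_zero]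
      exact DWalk.nil x
  | succ k ih =>
      have h : x + ((k + 1 : ℕ) : ZMod n) = (x + 1) + (k : ZMod n) := by push_cast; ring
      rw [h, L_succ]
      exact DWalk.cons rfl (ih (x + 1))

lemma dwalk_iff {x y : ZMod n} {l : List (ZMod n)} :
    DWalk (fun i j : ZMod n => j = i + 1) x y l ↔
      ∃ k : ℕ, y = x + (k : ZMod n) ∧ l = L x k := by
  constructor
  · intro h
    induction h with
    | nil v => exact ⟨0, by simp, (L_zero v).symm⟩
    | cons h p ih =>
        obtain ⟨k, hk, hl⟩ := ih
        subst h
        refine ⟨k + 1, by rw [hk]; push_cast; ring, by rw [hl, L_succ]⟩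
  · rintro ⟨k, rfl, rfl⟩
    exact dwalk_L k x

lemma shortest_char {x y : ZMod n} {l : List (ZMod n)} :
    IsShortest (fun i j : ZMod n => j = i + 1) x y l ↔ l = L x ((y - x).val) := by
  have hv : ((y - x).val : ZMod n) = y - x := by
    simp [ZMod.natCast_val, ZMod.cast_id]
  have hy : y = x + ((y - x).val : ZMod n) := by rw [hv]; ring
  have hmin : ∀ k : ℕ, y = x + (k : ZMod n) → (y - x).val ≤ k := by
    intro k hk
    have : ((y - x).val : ZMod n) = (k : ZMod n) := by rw [hv, hk]; ring
    have hmod := (ZMod.natCast_eq_natCast_iff _ _ _).1 this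
    have h1 : (y - x).val % n = k % n := hmod
    have h2 : (y - x).val % n = (y - x).val := Nat.mod_eq_of_lt (ZMod.val_lt _)
    calc (y - x).val = k % n := by rw [← h2, h1]
      _ ≤ k := Nat.mod_le k n
  constructor
  · rintro ⟨hw, hsh⟩
    obtain ⟨k, hk, rfl⟩ := dwalk_iff.1 hw
    have h1 : (y - x).val ≤ k := hmin k hk
    have h2 : k ≤ (y - x).val := by
      have := hsh (L x ((y - x).val)) (dwalk_iff.2 ⟨_, hy, rfl⟩)
      simpa [L_length] using this
    rw [le_antisymm h2 h1]
  · rintro rfl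
    refine ⟨dwalk_iff.2 ⟨_, hy, rfl⟩, ?_⟩
    intro l' hl'
    obtain ⟨k, hk, rfl⟩ := dwalk_iff.1 hl'
    simp only [L_length]
    exact Nat.succ_le_succ (hmin k hk)

lemma arcOn_L {x : ZMod n} {k i : ℕ} (hik : i < k) :
    ArcOn (x + (i : ZMod n)) (x + (i : ZMod n) + 1) (L x k) := by
  induction i generalizing x k with
  | zero =>
      obtain ⟨k', rfl⟩ : ∃ k', k = k' + 1 := ⟨k - 1, by omega⟩
      obtain ⟨t, ht⟩ := L_head (x + 1) k'
      refine ⟨[], t, ?_⟩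
      rw [L_succ, ht]
      simp
  | succ i ih =>
      obtain ⟨k', rfl⟩ : ∃ k', k = k' + 1 := ⟨k - 1, by omega⟩
      have hik' : i < k' := by omega
      obtain ⟨l₁, l₂, h⟩ := ih (x := x + 1) hik'
      refine ⟨x :: l₁, l₂, ?_⟩
      have hx : x + ((i + 1 : ℕ) : ZMod n) = (x + 1) + (i : ZMod n) := by push_cast; ring
      rw [hx, L_succ, h]
      simp

lemma cycle_monitors {x y : ZMod n} (hxy : x ≠ y) (a : ZMod n) :
    Monitors (fun i j : ZMod n => j = i + 1) x y a (a + 1) := by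
  set v := (y - x).val with hvdef
  set i := (a - x).val with hidef
  have hvpos : 0 < v := by
    rcases Nat.eq_zero_or_pos v with h | h
    · exfalso
      have : y - x = 0 := (ZMod.val_eq_zero _).1 h
      exact hxy (sub_eq_zero.mp this).symm
    · exact h
  have hiv : ((i : ℕ) : ZMod n) = a - x := by simp [hidef, ZMod.natCast_val, ZMod.cast_id]
  have ha : a = x + (i : ZMod n) := by rw [hiv]; ring
  by_cases hcase : i < v
  · left
    constructor
    · exact ⟨L x v, shortest_char.2 rfl⟩
    · intro l hl
      rw [shortest_char.1 hl, ha]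
      exact arcOn_L hcase
  · right
    push_neg at hcase
    have hvv : ((v : ℕ) : ZMod n) = y - x := by simp [hvdef, ZMod.natCast_val, ZMod.cast_id]
    set w := (x - y).val with hwdef
    have hxmy : x - y = -(y - x) := by ring
    have hw : w = n - v := by
      rw [hwdef, hxmy, ZMod.neg_val]
      have : y - x ≠ 0 := fun h => hxy (sub_eq_zero.mp h).symm
      simp [this, hvdef]
    have hin : i < n := ZMod.val_lt _
    have hvn : v < n := ZMod.val_lt _
    have hsub : i - v < w := by omega
    have ha' : a = y + ((i - v : ℕ) : ZMod n) := by
      have : ((i - v : ℕ) : ZMod n) = (i : ZMod n) - (v : ZMod n) := by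
        rw [Nat.cast_sub hcase]
      rw [this, hiv, hvv]
      ring
    constructor
    · exact ⟨L y w, shortest_char.2 rfl⟩
    · intro l hl
      rw [shortest_char.1 hl, ha']
      exact arcOn_L hsub

end Cycle

/-- in the consistently directed cycle on `n ≥ 3` vertices, any
two distinct vertices form a MAG-set, and the monitoring arc-geodetic number
is `2`. -/
theorem directedCycle_mag_eq_two (n : ℕ) [NeZero n] (hn : 3 ≤ n) :
    (∀ x y : ZMod n, x ≠ y →
      IsMAGSet (fun i j : ZMod n => j = i + 1) {x, y}) ∧
    mag (fun i j : ZMod n => j = i + 1) = 2 := by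
  haveI : Fact (1 < n) := ⟨by omega⟩
  have hmag : ∀ x y : ZMod n, x ≠ y →
      IsMAGSet (fun i j : ZMod n => j = i + 1) {x, y} := by
    intro x y hxy a b hab
    refine ⟨x, Set.mem_insert _ _, y, Set.mem_insert_of_mem _ rfl, hxy, ?_⟩
    rw [hab]
    exact cycle_monitors hxy a
  refine ⟨hmag, ?_⟩
  have h01 : (0 : ZMod n) ≠ 1 := zero_ne_one
  have h2 : 2 ∈ {m | ∃ M : Finset (ZMod n),
      IsMAGSet (fun i j : ZMod n => j = i + 1) (M : Set (ZMod n)) ∧ M.card = m} := by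
    refine ⟨{0, 1}, ?_, by simp [h01]⟩
    have : (({0, 1} : Finset (ZMod n)) : Set (ZMod n)) = {(0 : ZMod n), 1} := by simp
    rw [this]
    exact hmag 0 1 h01
  refine le_antisymm (Nat.sInf_le h2) (le_csInf ⟨2, h2⟩ ?_)
  rintro m ⟨M, hM, rfl⟩
  obtain ⟨x, hx, y, hy, hxy, -⟩ := hM 0 1 (by simp)
  exact Finset.one_lt_card.2 ⟨x, hx, y, hy, hxy⟩

end MAG
end

section
/- Let an orientation of the cycle C_n have exactly one source and one sink which are at distance d ≠ n/2 along the cycle. Then its monitoring arc-geodetic number equals 3. -/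
namespace MAG

variable {V : Type*}

/-! ### Auxiliary lemmas -/

section Helpers

variable {A : V → V → Prop}

lemma dwalk_head {x y : V} {l : List V} (h : DWalk A x y l) : ∃ t, l = x :: t := by
  cases h with
  | nil v => exact ⟨[], rfl⟩
  | cons h p => exact ⟨_, rfl⟩

lemma arcOn_cons {a b c : V} {l : List V} (h : ArcOn a b l) : ArcOn a b (c :: l) := by
  obtain ⟨l₁, l₂, rfl⟩ := h
  exact ⟨c :: l₁, l₂, rfl⟩

lemma mem_arcOn {x y a b : V} {l : List V} (h : DWalk A x y l) (ha : a ∈ l)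
    (hay : a ≠ y) (hub : ∀ c, A a c → c = b) : ArcOn a b l := by
  induction h with
  | nil v =>
    simp only [List.mem_singleton] at ha
    exact absurd ha hay
  | cons h p ih =>
    rename_i u v w l'
    rcases List.mem_cons.mp ha with rfl | ha'
    · obtain ⟨t, rfl⟩ := dwalk_head p
      have hb : v = b := hub v h
      subst hb
      exact ⟨[], t, rfl⟩
    · exact arcOn_cons (ih ha' hay)

lemma exists_shortest {x y : V} (h : ∃ l, DWalk A x y l) :
    ∃ l, IsShortest A x y l := by
  obtain ⟨l0, hl0⟩ := h
  have hne : {k | ∃ l : List V, DWalk A x y l ∧ l.length = k}.Nonempty :=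
    ⟨l0.length, l0, hl0, rfl⟩
  obtain ⟨l, hl, hlen⟩ := Nat.sInf_mem hne
  exact ⟨l, hl, fun l' hl' => hlen ▸ Nat.sInf_le ⟨l', hl', rfl⟩⟩

lemma arcOn_start {x y z b : V} {l : List V} (h : DWalk A x y l)
    (hz : ∀ w, ¬ A w z) (ha : ArcOn z b l) : ∃ t, l = z :: b :: t := by
  induction h with
  | nil v =>
    obtain ⟨l₁, l₂, he⟩ := ha
    have : (1:ℕ) = l₁.length + (l₂.length + 2) := by
      simpa using congrArg List.length he
    omega
  | cons h p ih =>
    rename_i u v w l'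
    obtain ⟨l₁, l₂, he⟩ := ha
    cases l₁ with
    | nil =>
      simp only [List.nil_append, List.cons.injEq] at he
      exact ⟨l₂, by rw [he.1, he.2]⟩
    | cons c l₁' =>
      simp only [List.cons_append, List.cons.injEq] at he
      obtain ⟨t, ht⟩ := ih ⟨l₁', l₂, he.2⟩
      obtain ⟨t', ht'⟩ := dwalk_head p
      rw [ht] at ht'
      injection ht' with h1 _
      subst h1
      exact absurd h (hz u)

end Helpers

/-! ### The oriented cycle -/

abbrev Arc (n d : ℕ) : Fin n → Fin n → Prop := fun i j =>
  (i.val < d ∧ j.val = i.val + 1) ∨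
  (i.val = 0 ∧ j.val = n - 1) ∨
  (d + 1 ≤ i.val ∧ j.val = i.val - 1)

section Cycle

variable {n d : ℕ}

lemma no_in_zero (hn : 3 ≤ n) (hd1 : 1 ≤ d) {i j : Fin n} (h : Arc n d i j) :
    j.val ≠ 0 := by
  have := i.isLt
  rcases h with ⟨h1, h2⟩ | ⟨h1, h2⟩ | ⟨h1, h2⟩ <;> omega

lemma out_unique {i j j' : Fin n} (hi : i.val ≠ 0) (h : Arc n d i j)
    (h' : Arc n d i j') : j' = j := by
  apply Fin.val_injective
  rcases h with ⟨h1, h2⟩ | ⟨h1, h2⟩ | ⟨h1, h2⟩ <;>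
    rcases h' with ⟨g1, g2⟩ | ⟨g1, g2⟩ | ⟨g1, g2⟩ <;> omega

lemma arc_from_zero {i j : Fin n} (hi : i.val = 0) (h : Arc n d i j) :
    j.val = 1 ∨ j.val = n - 1 := by
  rcases h with ⟨h1, h2⟩ | ⟨h1, h2⟩ | ⟨h1, h2⟩ <;> omega

lemma short_walk {x y : Fin n} {l : List (Fin n)} (h : DWalk (Arc n d) x y l) :
    1 ≤ x.val → x.val ≤ d →
    x.val ≤ y.val ∧ y.val ≤ d ∧ y.val + 1 ≤ x.val + l.length ∧
      ∀ i : Fin n, x.val ≤ i.val → i.val ≤ y.val → i ∈ l := by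
  induction h with
  | nil v =>
    intro h1 h2
    refine ⟨le_rfl, h2, by simp, fun i hi1 hi2 => ?_⟩
    have : i = v := Fin.val_injective (le_antisymm hi2 hi1)
    simp [this]
  | cons h p ih =>
    rename_i u v w l'
    intro h1 h2
    have hv : v.val = u.val + 1 ∧ u.val < d := by
      rcases h with ⟨a1, a2⟩ | ⟨a1, a2⟩ | ⟨a1, a2⟩ <;> omega
    obtain ⟨hu1, hu2, hu3, hu4⟩ := ih (by omega) (by omega)
    refine ⟨by omega, hu2, by simp only [List.length_cons]; omega, fun i hi1 hi2 => ?_⟩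
    by_cases hiu : i.val = u.val
    · have : i = u := Fin.val_injective hiu
      simp [this]
    · exact List.mem_cons_of_mem _ (hu4 i (by omega) hi2)

lemma long_walk (hd1 : 1 ≤ d) {x y : Fin n} {l : List (Fin n)}
    (h : DWalk (Arc n d) x y l) :
    d ≤ x.val →
    d ≤ y.val ∧ y.val ≤ x.val ∧ x.val + 1 ≤ y.val + l.length ∧
      ∀ i : Fin n, y.val ≤ i.val → i.val ≤ x.val → i ∈ l := by
  induction h with
  | nil v =>
    intro h1
    refine ⟨h1, le_rfl, by simp, fun i hi1 hi2 => ?_⟩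
    have : i = v := Fin.val_injective (le_antisymm hi2 hi1)
    simp [this]
  | cons h p ih =>
    rename_i u v w l'
    intro h1
    have hv : v.val = u.val - 1 ∧ d + 1 ≤ u.val := by
      rcases h with ⟨a1, a2⟩ | ⟨a1, a2⟩ | ⟨a1, a2⟩ <;> omega
    obtain ⟨hu1, hu2, hu3, hu4⟩ := ih (by omega)
    refine ⟨hu1, by omega, by simp only [List.length_cons]; omega, fun i hi1 hi2 => ?_⟩
    by_cases hiu : i.val = u.val
    · have : i = u := Fin.val_injective hiu
      simp [this]
    · exact List.mem_cons_of_mem _ (hu4 i hi1 (by omega))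

lemma walk_up : ∀ (k : ℕ) (x y : Fin n), 1 ≤ x.val → y.val ≤ d →
    y.val = x.val + k → ∃ l, DWalk (Arc n d) x y l ∧ l.length = k + 1 := by
  intro k
  induction k with
  | zero =>
    intro x y h1 h2 h3
    have : y = x := Fin.val_injective (by omega)
    subst this
    exact ⟨[y], DWalk.nil y, rfl⟩
  | succ k ih =>
    intro x y h1 h2 h3
    have hxd : x.val < d := by omega
    have hx1 : x.val + 1 < n := by have := y.isLt; omega
    obtain ⟨l, hl, hlen⟩ := ih ⟨x.val + 1, hx1⟩ y (by simp) h2 (by simp; omega)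
    exact ⟨x :: l, DWalk.cons (Or.inl ⟨hxd, rfl⟩) hl,
      by simp only [List.length_cons, hlen]⟩

lemma walk_down : ∀ (k : ℕ) (x y : Fin n), d ≤ y.val →
    x.val = y.val + k → ∃ l, DWalk (Arc n d) x y l ∧ l.length = k + 1 := by
  intro k
  induction k with
  | zero =>
    intro x y h1 h3
    have : x = y := Fin.val_injective (by omega)
    subst this
    exact ⟨[x], DWalk.nil x, rfl⟩
  | succ k ih =>
    intro x y h1 h3
    have hx : d + 1 ≤ x.val := by omega
    have hx1 : x.val - 1 < n := by have := x.isLt; omega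
    obtain ⟨l, hl, hlen⟩ := ih ⟨x.val - 1, hx1⟩ y h1 (by simp; omega)
    exact ⟨x :: l, DWalk.cons (Or.inr (Or.inr ⟨hx, rfl⟩)) hl,
      by simp only [List.length_cons, hlen]⟩

end Cycle


/-- the orientation of `C_n` with exactly one source `v_1` and one
sink `v_{d+1}` at distance `d ≠ n/2` has monitoring arc-geodetic number `3`.
(`0`-based: source is vertex `0`, sink is vertex `d`.) -/
theorem cycle_one_source_one_sink_mag_eq_three (n d : ℕ) (hn : 3 ≤ n)
    (hd1 : 1 ≤ d) (hd2 : d ≤ n - 1) (hd : 2 * d ≠ n) :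
    mag (fun i j : Fin n =>
      (i.val < d ∧ j.val = i.val + 1) ∨
      (i.val = 0 ∧ j.val = n - 1) ∨
      (d + 1 ≤ i.val ∧ j.val = i.val - 1)) = 3 := by
  show mag (Arc n d) = 3
  obtain ⟨v0, hv0⟩ : ∃ v : Fin n, v.val = 0 := ⟨⟨0, by omega⟩, rfl⟩
  obtain ⟨v1, hv1⟩ : ∃ v : Fin n, v.val = 1 := ⟨⟨1, by omega⟩, rfl⟩
  obtain ⟨vd, hvd⟩ : ∃ v : Fin n, v.val = d := ⟨⟨d, by omega⟩, rfl⟩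
  obtain ⟨vl, hvl⟩ : ∃ v : Fin n, v.val = n - 1 := ⟨⟨n - 1, by omega⟩, rfl⟩
  have source0 : ∀ w, ¬ Arc n d w v0 := fun w h => no_in_zero hn hd1 h hv0
  have arc01 : Arc n d v0 v1 := Or.inl ⟨by omega, by omega⟩
  have arc0l : Arc n d v0 vl := Or.inr (Or.inl ⟨hv0, hvl⟩)
  have hne0d : v0 ≠ vd := by intro h; have := congrArg Fin.val h; omega
  -- decomposition of walks leaving v0
  have decomp : ∀ {y : Fin n} {l : List (Fin n)}, DWalk (Arc n d) v0 y l → y ≠ v0 →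
      ∃ (c : Fin n) (t' : List (Fin n)), (c.val = 1 ∨ c.val = n - 1) ∧
        DWalk (Arc n d) c y (c :: t') ∧ l = v0 :: c :: t' := by
    intro y l h hy
    cases h with
    | nil => exact absurd rfl hy
    | cons harc p =>
      obtain ⟨t', rfl⟩ := dwalk_head p
      exact ⟨_, t', arc_from_zero hv0 harc, p, rfl⟩
  -- canonical walks from v0 to vd
  have wshort : ∃ l, DWalk (Arc n d) v0 vd l ∧ l.length = d + 1 := by
    obtain ⟨l, hl, hlen⟩ := walk_up (n := n) (d := d) (d - 1) v1 vd (by omega) (by omega) (by omega)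
    exact ⟨v0 :: l, DWalk.cons arc01 hl, by simp only [List.length_cons, hlen]; omega⟩
  have wlong : ∃ l, DWalk (Arc n d) v0 vd l ∧ l.length = n - d + 1 := by
    obtain ⟨l, hl, hlen⟩ := walk_down (n := n) (d := d) (n - 1 - d) vl vd (by omega) (by omega)
    exact ⟨v0 :: l, DWalk.cons arc0l hl, by simp only [List.length_cons, hlen]; omega⟩
  -- membership of 3
  have hmem3 : 3 ∈ {m | ∃ M : Finset (Fin n),
      IsMAGSet (Arc n d) (M : Set (Fin n)) ∧ M.card = m} := by
    rcases lt_or_gt_of_ne hd with hcase | hcase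
    · -- 2 * d < n : M = {v0, vd, vx} with vx.val = d + 1
      obtain ⟨vx, hvx⟩ : ∃ v : Fin n, v.val = d + 1 := ⟨⟨d + 1, by omega⟩, rfl⟩
      have hne0x : v0 ≠ vx := by intro h; have := congrArg Fin.val h; omega
      have hnedx : vd ≠ vx := by intro h; have := congrArg Fin.val h; omega
      have hnex0 : vx ≠ v0 := fun h => hne0x h.symm
      have hnexd : vx ≠ vd := fun h => hnedx h.symm
      refine ⟨{v0, vd, vx}, ?_, ?_⟩
      · intro a b hab
        rcases hab with ⟨ha, hb⟩ | ⟨ha, hb⟩ | ⟨ha, hb⟩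
        · -- short arcs: pair (v0, vd)
          refine ⟨v0, by simp, vd, by simp, hne0d, Or.inl ⟨exists_shortest ⟨_, wshort.choose_spec.1⟩, ?_⟩⟩
          intro l hl
          obtain ⟨c, t', hc, p, rfl⟩ := decomp hl.1 (fun h => hne0d h.symm)
          rcases hc with hc1 | hcl
          · by_cases ha0 : a.val = 0
            · have hac : a = v0 := (by apply Fin.val_injective; omega)
              have hbc : b = c := (by apply Fin.val_injective; omega)
              exact ⟨[], t', by rw [hac, hbc]; rfl⟩
            · have hmem := (short_walk p (by omega) (by omega)).2.2.2 a (by omega) (by omega)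
              refine arcOn_cons (mem_arcOn p hmem ?_ (fun c' hc' => out_unique ha0 (Or.inl ⟨ha, hb⟩) hc'))
              intro h; have := congrArg Fin.val h; omega
          · exfalso
            have hlong := (long_walk hd1 p (by omega)).2.2.1
            obtain ⟨ls, hls, hlslen⟩ := wshort
            have hmin := hl.2 ls hls
            simp only [List.length_cons] at hlong hmin
            omega
        · -- arc (v0, vl): pair (v0, vx)
          have wx : ∃ l, DWalk (Arc n d) v0 vx l := by
            obtain ⟨l, hl, -⟩ := walk_down (n := n) (d := d) (n - 1 - (d + 1)) vl vx (by omega) (by omega)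
            exact ⟨v0 :: l, DWalk.cons arc0l hl⟩
          refine ⟨v0, by simp, vx, by simp, hne0x, Or.inl ⟨exists_shortest wx, ?_⟩⟩
          intro l hl
          obtain ⟨c, t', hc, p, rfl⟩ := decomp hl.1 hnex0
          rcases hc with hc1 | hcl
          · exfalso
            have := (short_walk p (by omega) (by omega)).2.1
            omega
          · have hac : a = v0 := (by apply Fin.val_injective; omega)
            have hbc : b = c := (by apply Fin.val_injective; omega)
            exact ⟨[], t', by rw [hac, hbc]; rfl⟩
        · -- arcs (a, a-1), d + 1 ≤ a
          by_cases hax : a.val = d + 1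
          · -- pair (vx, vd)
            have hax' : a = vx := by apply Fin.val_injective; omega
            have hbd : b = vd := by apply Fin.val_injective; omega
            have wxd : ∃ l, DWalk (Arc n d) vx vd l := by
              obtain ⟨l, hl, -⟩ := walk_down (n := n) (d := d) 1 vx vd (by omega) (by omega)
              exact ⟨l, hl⟩
            refine ⟨vx, by simp, vd, by simp, hnexd, Or.inl ⟨exists_shortest wxd, ?_⟩⟩
            intro l hl
            obtain ⟨t, rfl⟩ := dwalk_head hl.1
            rw [hax', hbd]
            exact mem_arcOn hl.1 List.mem_cons_self hnexd
              (fun c' hc' => out_unique (by omega) (Or.inr (Or.inr ⟨by omega, by omega⟩)) hc')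
          · -- pair (v0, vx), a.val ≥ d + 2
            have wx : ∃ l, DWalk (Arc n d) v0 vx l := by
              obtain ⟨l, hl, -⟩ := walk_down (n := n) (d := d) (n - 1 - (d + 1)) vl vx (by omega) (by omega)
              exact ⟨v0 :: l, DWalk.cons arc0l hl⟩
            refine ⟨v0, by simp, vx, by simp, hne0x, Or.inl ⟨exists_shortest wx, ?_⟩⟩
            intro l hl
            obtain ⟨c, t', hc, p, rfl⟩ := decomp hl.1 hnex0
            rcases hc with hc1 | hcl
            · exfalso
              have := (short_walk p (by omega) (by omega)).2.1
              omega
            · have := a.isLt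
              have hmem := (long_walk hd1 p (by omega)).2.2.2 a (by omega) (by omega)
              refine arcOn_cons (mem_arcOn p hmem ?_ (fun c' hc' => out_unique (by omega) (Or.inr (Or.inr ⟨ha, hb⟩)) hc'))
              intro h; have := congrArg Fin.val h; omega
      · -- card = 3
        rw [Finset.card_insert_of_notMem (by simp [hne0d, hne0x]),
          Finset.card_insert_of_notMem (by simp [hnedx]), Finset.card_singleton]
    · -- 2 * d > n : M = {v0, v1, vd}
      have hd2' : 2 ≤ d := by omega
      have hne01 : v0 ≠ v1 := by intro h; have := congrArg Fin.val h; omega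
      have hne1d : v1 ≠ vd := by intro h; have := congrArg Fin.val h; omega
      refine ⟨{v0, v1, vd}, ?_, ?_⟩
      · intro a b hab
        rcases hab with ⟨ha, hb⟩ | ⟨ha, hb⟩ | ⟨ha, hb⟩
        · by_cases ha0 : a.val = 0
          · -- arc (v0, v1): pair (v0, v1)
            refine ⟨v0, by simp, v1, by simp, hne01,
              Or.inl ⟨exists_shortest ⟨[v0, v1], DWalk.cons arc01 (DWalk.nil v1)⟩, ?_⟩⟩
            intro l hl
            obtain ⟨c, t', hc, p, rfl⟩ := decomp hl.1 (fun h => hne01 h.symm)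
            rcases hc with hc1 | hcl
            · have hac : a = v0 := (by apply Fin.val_injective; omega)
              have hbc : b = c := (by apply Fin.val_injective; omega)
              exact ⟨[], t', by rw [hac, hbc]; rfl⟩
            · exfalso
              have := (long_walk hd1 p (by omega)).1
              omega
          · -- pair (v1, vd)
            have w1d : ∃ l, DWalk (Arc n d) v1 vd l := by
              obtain ⟨l, hl, -⟩ := walk_up (n := n) (d := d) (d - 1) v1 vd (by omega) (by omega) (by omega)
              exact ⟨l, hl⟩
            refine ⟨v1, by simp, vd, by simp, hne1d, Or.inl ⟨exists_shortest w1d, ?_⟩⟩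
            intro l hl
            have hmem := (short_walk hl.1 (by omega) (by omega)).2.2.2 a (by omega) (by omega)
            refine mem_arcOn hl.1 hmem ?_ (fun c' hc' => out_unique ha0 (Or.inl ⟨ha, hb⟩) hc')
            intro h; have := congrArg Fin.val h; omega
        · -- arc (v0, vl): pair (v0, vd)
          refine ⟨v0, by simp, vd, by simp, hne0d, Or.inl ⟨exists_shortest ⟨_, wlong.choose_spec.1⟩, ?_⟩⟩
          intro l hl
          obtain ⟨c, t', hc, p, rfl⟩ := decomp hl.1 (fun h => hne0d h.symm)
          rcases hc with hc1 | hcl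
          · exfalso
            have hlen := (short_walk p (by omega) (by omega)).2.2.1
            obtain ⟨ls, hls, hlslen⟩ := wlong
            have hmin := hl.2 ls hls
            simp only [List.length_cons] at hlen hmin
            omega
          · have hac : a = v0 := (by apply Fin.val_injective; omega)
            have hbc : b = c := (by apply Fin.val_injective; omega)
            exact ⟨[], t', by rw [hac, hbc]; rfl⟩
        · -- arcs (a, a-1): pair (v0, vd)
          refine ⟨v0, by simp, vd, by simp, hne0d, Or.inl ⟨exists_shortest ⟨_, wlong.choose_spec.1⟩, ?_⟩⟩
          intro l hl
          obtain ⟨c, t', hc, p, rfl⟩ := decomp hl.1 (fun h => hne0d h.symm)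
          rcases hc with hc1 | hcl
          · exfalso
            have hlen := (short_walk p (by omega) (by omega)).2.2.1
            obtain ⟨ls, hls, hlslen⟩ := wlong
            have hmin := hl.2 ls hls
            simp only [List.length_cons] at hlen hmin
            omega
          · have := a.isLt
            have hmem := (long_walk hd1 p (by omega)).2.2.2 a (by omega) (by omega)
            refine arcOn_cons (mem_arcOn p hmem ?_ (fun c' hc' => out_unique (by omega) (Or.inr (Or.inr ⟨ha, hb⟩)) hc'))
            intro h; have := congrArg Fin.val h; omega
      · rw [Finset.card_insert_of_notMem (by simp [hne01, hne0d]),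
          Finset.card_insert_of_notMem (by simp [hne1d]), Finset.card_singleton]
  -- lower bound: every element of the set is ≥ 3
  have hlow : ∀ m ∈ {m | ∃ M : Finset (Fin n),
      IsMAGSet (Arc n d) (M : Set (Fin n)) ∧ M.card = m}, 3 ≤ m := by
    rintro m ⟨M, hM, rfl⟩
    by_contra hlt
    push_neg at hlt
    obtain ⟨x₁, hx₁, y₁, hy₁, hxy₁, hmon₁⟩ := hM v0 v1 arc01
    obtain ⟨x₂, hx₂, y₂, hy₂, hxy₂, hmon₂⟩ := hM v0 vl arc0l
    have ext : ∀ {x y a : Fin n}, x ∈ (M : Set (Fin n)) → y ∈ (M : Set (Fin n)) →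
        x ≠ y → Monitors (Arc n d) x y v0 a →
        ∃ p q : Fin n, p ∈ M ∧ q ∈ M ∧ p ≠ q ∧ (∃ l, IsShortest (Arc n d) p q l) ∧
          (∀ l, IsShortest (Arc n d) p q l → ArcOn v0 a l) := by
      rintro x y a hx hy hxy (⟨h1, h2⟩ | ⟨h1, h2⟩)
      exacts [⟨x, y, hx, hy, hxy, h1, h2⟩, ⟨y, x, hy, hx, fun h => hxy h.symm, h1, h2⟩]
    obtain ⟨p₁, q₁, hp₁M, hq₁M, hpq₁, ⟨l₁, hl₁⟩, hall₁⟩ := ext hx₁ hy₁ hxy₁ hmon₁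
    obtain ⟨p₂, q₂, hp₂M, hq₂M, hpq₂, ⟨l₂, hl₂⟩, hall₂⟩ := ext hx₂ hy₂ hxy₂ hmon₂
    have start : ∀ {p q : Fin n} {l : List (Fin n)} {b : Fin n}, IsShortest (Arc n d) p q l →
        ArcOn v0 b l → p = v0 ∧ ∃ t, l = v0 :: b :: t := by
      intro p q l b hl ha
      obtain ⟨t, ht⟩ := arcOn_start hl.1 source0 ha
      obtain ⟨t', ht'⟩ := dwalk_head hl.1
      rw [ht] at ht'
      injection ht' with h1 _
      exact ⟨h1.symm, t, ht⟩
    obtain ⟨hp₁0, -⟩ := start hl₁ (hall₁ l₁ hl₁)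
    obtain ⟨hp₂0, -⟩ := start hl₂ (hall₂ l₂ hl₂)
    rw [hp₁0] at hl₁ hpq₁ hp₁M
    rw [hp₂0] at hl₂ hpq₂ hp₂M
    have hall₁' : ∀ l, IsShortest (Arc n d) v0 q₁ l → ArcOn v0 v1 l := by
      rw [hp₁0] at hall₁; exact hall₁
    have hall₂' : ∀ l, IsShortest (Arc n d) v0 q₂ l → ArcOn v0 vl l := by
      rw [hp₂0] at hall₂; exact hall₂
    have hq12 : q₁ = q₂ := by
      by_contra hne
      have hsub : ({v0, q₁, q₂} : Finset (Fin n)) ⊆ M := by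
        intro z hz
        simp only [Finset.mem_insert, Finset.mem_singleton] at hz
        rcases hz with rfl | rfl | rfl
        exacts [hp₁M, hq₁M, hq₂M]
      have hcard : ({v0, q₁, q₂} : Finset (Fin n)).card = 3 := by
        rw [Finset.card_insert_of_notMem (by simp [hpq₁, hpq₂]),
          Finset.card_insert_of_notMem (by simp [hne]), Finset.card_singleton]
      have := Finset.card_le_card hsub
      omega
    rw [← hq12] at hall₂'
    obtain ⟨-, t, ht⟩ := start hl₁ (hall₁' l₁ hl₁)
    obtain ⟨-, t2, ht2⟩ := start hl₁ (hall₂' l₁ hl₁)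
    rw [ht] at ht2
    injection ht2 with _ h2
    injection h2 with h3 _
    have := congrArg Fin.val h3
    omega
  exact le_antisymm (Nat.sInf_le hmem3) (hlow _ (Nat.sInf_mem ⟨3, hmem3⟩))

end MAG
end
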